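/- arXiv:2104.03863 — 3 statements merged into one kernel-verified Lean document; each statement's English description precedes it below -/
import Mathlib

section
/- Suppose f : ℝ^d → ℝ is continuous and C¹, |f(x)| ≤ |η|/10, ‖∇f(x)‖ ≥ c > 0, sign(η) = −sign(f(x)) with f(x) ≠ 0, and ‖∇f(x) − ∇f(x+δ)‖ ≤ c/10 for all δ with ‖δ‖ ≤ |η|/‖∇f(x)‖. Then sign(f(x)) ≠ sign(f(x + (η/‖∇f(x)‖²)·∇f(x))). -/
/-- A single gradient step flips the sign of `f` under quantitative bounds on the value,
the gradient norm, and the local gradient variation. -/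
theorem stmt_2 {d : ℕ} (f : EuclideanSpace ℝ (Fin d) → ℝ)
    (hf : ContDiff ℝ 1 f) (x : EuclideanSpace ℝ (Fin d)) (η c : ℝ) (hc : 0 < c)
    (hfx : f x ≠ 0)
    (hval : |f x| ≤ |η| / 10)
    (hgrad : c ≤ ‖gradient f x‖)
    (hsign : Real.sign η = -Real.sign (f x))
    (hdev : ∀ δ : EuclideanSpace ℝ (Fin d), ‖δ‖ ≤ |η| / ‖gradient f x‖ →
      ‖gradient f x - gradient f (x + δ)‖ ≤ c / 10) :
    Real.sign (f x) ≠ Real.sign (f (x + (η / ‖gradient f x‖ ^ 2) • gradient f x)) := by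
  have hdiff : Differentiable ℝ f := hf.differentiable one_ne_zero
  set g := gradient f x with hg
  set G := ‖g‖ with hG
  have hG0 : (0:ℝ) < G := lt_of_lt_of_le hc hgrad
  have hη : η ≠ 0 := by
    intro h
    apply hfx
    have : |f x| ≤ 0 := by simpa [h] using hval
    exact abs_eq_zero.mp (le_antisymm this (abs_nonneg _))
  have hηabs : 0 < |η| := abs_pos.mpr hη
  set s := (η / G ^ 2) • g with hs
  have hns : ‖s‖ = |η| / G := by
    rw [hs, norm_smul, Real.norm_eq_abs, abs_div, abs_pow, abs_of_pos hG0, ← hG]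
    field_simp
  -- fderiv in terms of gradient
  have hfd : ∀ y, fderiv ℝ f y = InnerProductSpace.toDual ℝ _ (gradient f y) := by
    intro y
    rw [gradient, LinearIsometryEquiv.apply_symm_apply]
  -- mean value estimate on the closed ball
  have key : ‖f (x + s) - f x - (fderiv ℝ f x) ((x + s) - x)‖
      ≤ (c / 10) * ‖(x + s) - x‖ := by
    apply Convex.norm_image_sub_le_of_norm_hasFDerivWithin_le'
      (f' := fun y => fderiv ℝ f y)
      (fun y _ => (hdiff y).hasFDerivAt.hasFDerivWithinAt)
      (fun y hy => ?_) (convex_closedBall x (|η| / G))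
      (Metric.mem_closedBall_self (by positivity))
      (by
        rw [Metric.mem_closedBall, dist_eq_norm, add_sub_cancel_left, hns])
    · rw [Metric.mem_closedBall, dist_eq_norm] at hy
      have := hdev (y - x) (by simpa using hy)
      rw [add_sub_cancel] at this
      calc ‖fderiv ℝ f y - fderiv ℝ f x‖
          = ‖gradient f y - gradient f x‖ := by
            rw [hfd y, hfd x, ← map_sub, LinearIsometryEquiv.norm_map]
        _ ≤ c / 10 := by rwa [norm_sub_rev]
  have happ : (fderiv ℝ f x) ((x + s) - x) = η := by
    rw [add_sub_cancel_left, hfd x, InnerProductSpace.toDual_apply_apply, hs,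
      real_inner_smul_right, real_inner_self_eq_norm_sq, ← hg, ← hG]
    field_simp
  rw [happ, add_sub_cancel_left, hns] at key
  have key2 : |f (x + s) - f x - η| ≤ |η| / 10 := by
    refine key.trans ?_
    have hcg : c / G ≤ 1 := (div_le_one hG0).mpr hgrad
    calc c / 10 * (|η| / G) = (c / G) * |η| / 10 := by ring
      _ ≤ 1 * |η| / 10 := by gcongr
      _ = |η| / 10 := by ring
  have hfx2 := abs_le.mp hval
  have hk2 := abs_le.mp key2
  rcases hfx.lt_or_gt with hneg | hpos
  · -- f x < 0, so sign f x = -1, sign η = 1, η > 0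
    have hsx : Real.sign (f x) = -1 := Real.sign_of_neg hneg
    have hηpos : 0 < η := by
      rcases lt_trichotomy η 0 with h | h | h
      · rw [hsx, Real.sign_of_neg h] at hsign; norm_num at hsign
      · exact absurd h hη
      · exact h
    have habsη : |η| = η := abs_of_pos hηpos
    have : 0 < f (x + s) := by
      rw [habsη] at hfx2 hk2
      nlinarith [hk2.1, hfx2.1]
    rw [hsx, Real.sign_of_pos this]
    norm_num
  · have hsx : Real.sign (f x) = 1 := Real.sign_of_pos hpos
    have hηneg : η < 0 := by
      rcases lt_trichotomy η 0 with h | h | h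
      · exact h
      · exact absurd h hη
      · rw [hsx, Real.sign_of_pos h] at hsign; norm_num at hsign
    have habsη : |η| = -η := abs_of_neg hηneg
    have : f (x + s) < 0 := by
      rw [habsη] at hfx2 hk2
      nlinarith [hk2.2, hfx2.2]
    rw [hsx, Real.sign_of_neg this]
    norm_num
end

section
/- Let w ~ N(0,(1/d)I_d), x ∈ ℝ^d with ‖x‖=√d, and δ ∈ ℝ^d with ‖δ‖ ≤ R. Then P(sign(w·x) ≠ sign(w·(x+δ))) ≤ R√(2 log(d)/d) + 1/d. -/
open MeasureTheory ProbabilityTheory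
open scoped RealInnerProductSpace ENNReal NNReal

namespace StmtAux

open Real

lemma exp_quad_eq (a b z : ℝ) (hab : a + b ≠ 0) : ∀ y : ℝ,
    -(a * (z - y) ^ 2) - b * y ^ 2
      = -(a + b) * (y - a * z / (a + b)) ^ 2 + -(a * b / (a + b)) * z ^ 2 := by
  intro y; field_simp; ring

lemma integral_exp_quad (a b z : ℝ) (ha : 0 < a) (hb : 0 < b) :
    ∫ y : ℝ, Real.exp (-(a * (z - y) ^ 2) - b * y ^ 2)
      = Real.sqrt (π / (a + b)) * Real.exp (-(a * b / (a + b)) * z ^ 2) := by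
  have hab : 0 < a + b := by linarith
  have h1 : (fun y : ℝ => Real.exp (-(a * (z - y) ^ 2) - b * y ^ 2))
      = fun y : ℝ => Real.exp (-(a + b) * (y - a * z / (a + b)) ^ 2)
          * Real.exp (-(a * b / (a + b)) * z ^ 2) := by
    funext y; rw [← Real.exp_add, exp_quad_eq a b z hab.ne' y]
  rw [h1, integral_mul_const,
    integral_sub_right_eq_self (fun y : ℝ => Real.exp (-(a + b) * y ^ 2)) (a * z / (a + b)),
    integral_gaussian]

lemma integrable_exp_quad (a b z : ℝ) (ha : 0 < a) (hb : 0 < b) :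
    Integrable (fun y : ℝ => Real.exp (-(a * (z - y) ^ 2) - b * y ^ 2)) := by
  have hab : 0 < a + b := by linarith
  have h1 : (fun y : ℝ => Real.exp (-(a * (z - y) ^ 2) - b * y ^ 2))
      = fun y : ℝ => Real.exp (-(a + b) * (y - a * z / (a + b)) ^ 2)
          * Real.exp (-(a * b / (a + b)) * z ^ 2) := by
    funext y; rw [← Real.exp_add, exp_quad_eq a b z hab.ne' y]
  rw [h1]
  exact ((integrable_exp_neg_mul_sq hab).comp_sub_right _).mul_const _

lemma gaussianPDFReal_conv (v1 v2 : ℝ≥0) (h1 : v1 ≠ 0) (h2 : v2 ≠ 0) (z : ℝ) :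
    ∫⁻ y : ℝ, gaussianPDF 0 v1 y * gaussianPDF 0 v2 (z - y)
      = gaussianPDF 0 (v1 + v2) z := by
  have hv1 : (0:ℝ) < v1 := by exact_mod_cast pos_iff_ne_zero.mpr h1
  have hv2 : (0:ℝ) < v2 := by exact_mod_cast pos_iff_ne_zero.mpr h2
  set a : ℝ := (2 * (v2:ℝ))⁻¹ with ha_def
  set b : ℝ := (2 * (v1:ℝ))⁻¹ with hb_def
  have ha : 0 < a := by positivity
  have hb : 0 < b := by positivity
  have hab : 0 < a + b := by linarith
  have hpi : (0:ℝ) < π := pi_pos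
  have hfeq : ∀ y : ℝ, gaussianPDFReal 0 v1 y * gaussianPDFReal 0 v2 (z - y)
      = ((Real.sqrt (2 * π * v1))⁻¹ * (Real.sqrt (2 * π * v2))⁻¹)
        * Real.exp (-(a * (z - y) ^ 2) - b * y ^ 2) := by
    intro y
    unfold gaussianPDFReal
    rw [mul_mul_mul_comm, ← Real.exp_add]
    congr 1
    rw [ha_def, hb_def]
    field_simp
    ring
  have hint : Integrable (fun y : ℝ =>
      gaussianPDFReal 0 v1 y * gaussianPDFReal 0 v2 (z - y)) := by
    have := (integrable_exp_quad a b z ha hb).const_mul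
      ((Real.sqrt (2 * π * v1))⁻¹ * (Real.sqrt (2 * π * v2))⁻¹)
    refine this.congr (Filter.Eventually.of_forall fun y => (hfeq y).symm)
  have hnn : 0 ≤ᶠ[ae volume] fun y : ℝ =>
      gaussianPDFReal 0 v1 y * gaussianPDFReal 0 v2 (z - y) :=
    Filter.Eventually.of_forall fun y =>
      mul_nonneg (gaussianPDFReal_nonneg _ _ _) (gaussianPDFReal_nonneg _ _ _)
  calc ∫⁻ y : ℝ, gaussianPDF 0 v1 y * gaussianPDF 0 v2 (z - y)
      = ∫⁻ y : ℝ, ENNReal.ofReal (gaussianPDFReal 0 v1 y * gaussianPDFReal 0 v2 (z - y)) := by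
        simp_rw [gaussianPDF, ← ENNReal.ofReal_mul (gaussianPDFReal_nonneg _ _ _)]
    _ = ENNReal.ofReal (∫ y : ℝ, gaussianPDFReal 0 v1 y * gaussianPDFReal 0 v2 (z - y)) :=
        (ofReal_integral_eq_lintegral_ofReal hint hnn).symm
    _ = gaussianPDF 0 (v1 + v2) z := by
        rw [gaussianPDF]
        congr 1
        have : ∫ y : ℝ, gaussianPDFReal 0 v1 y * gaussianPDFReal 0 v2 (z - y)
            = ((Real.sqrt (2 * π * v1))⁻¹ * (Real.sqrt (2 * π * v2))⁻¹)
              * (Real.sqrt (π / (a + b)) * Real.exp (-(a * b / (a + b)) * z ^ 2)) := by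
          simp_rw [hfeq]
          rw [integral_const_mul, integral_exp_quad a b z ha hb]
        rw [this]
        unfold gaussianPDFReal
        rw [show ((Real.sqrt (2 * π * v1))⁻¹ * (Real.sqrt (2 * π * v2))⁻¹)
              * (Real.sqrt (π / (a + b)) * Real.exp (-(a * b / (a + b)) * z ^ 2))
            = ((Real.sqrt (2 * π * v1))⁻¹ * (Real.sqrt (2 * π * v2))⁻¹ * Real.sqrt (π / (a + b)))
              * Real.exp (-(a * b / (a + b)) * z ^ 2) from by ring]
        congr 1
        · rw [← Real.sqrt_inv, ← Real.sqrt_inv, ← Real.sqrt_mul (by positivity),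
            ← Real.sqrt_mul (by positivity), ← Real.sqrt_inv]
          congr 1
          rw [ha_def, hb_def]
          have hsum : ((v1:ℝ) + v2) ≠ 0 := by positivity
          push_cast
          field_simp
        · congr 1
          rw [sub_zero, ha_def, hb_def]
          have hsum : ((v1:ℝ) + v2) ≠ 0 := by positivity
          push_cast
          have hcoef : (2 * (v2:ℝ))⁻¹ * (2 * (v1:ℝ))⁻¹ / ((2 * (v2:ℝ))⁻¹ + (2 * (v1:ℝ))⁻¹)
              = (2 * ((v1:ℝ) + v2))⁻¹ := by
            field_simp
          rw [hcoef]
          field_simp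

lemma gaussianReal_conv (v1 v2 : ℝ≥0) :
    (gaussianReal 0 v1).conv (gaussianReal 0 v2) = gaussianReal 0 (v1 + v2) := by
  rcases eq_or_ne v1 0 with rfl | h1
  · rw [gaussianReal_zero_var]; simp [Measure.dirac_conv]
  rcases eq_or_ne v2 0 with rfl | h2
  · rw [gaussianReal_zero_var]; simp [Measure.conv_dirac]
  have hsum : v1 + v2 ≠ 0 := by simp [h1]
  set g1 := gaussianPDF 0 v1 with hg1
  set g2 := gaussianPDF 0 v2 with hg2
  have hg1m : Measurable g1 := measurable_gaussianPDF _ _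
  have hg2m : Measurable g2 := measurable_gaussianPDF _ _
  ext s hs
  rw [gaussianReal_apply _ hsum, Measure.conv, Measure.map_apply measurable_add hs,
    gaussianReal_of_var_ne_zero _ h1, gaussianReal_of_var_ne_zero _ h2,
    Measure.prod_apply (measurable_add hs)]
  have hstep1 : ∀ x : ℝ, (volume.withDensity g2)
        (Prod.mk x ⁻¹' ((fun p : ℝ × ℝ => p.1 + p.2) ⁻¹' s))
      = ∫⁻ z, s.indicator (fun _ => (1:ℝ≥0∞)) z * g2 (z - x) := by
    intro x
    have hset : Prod.mk x ⁻¹' ((fun p : ℝ × ℝ => p.1 + p.2) ⁻¹' s)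
        = (fun y => x + y) ⁻¹' s := rfl
    rw [hset, withDensity_apply _ (hs.preimage (measurable_const_add x)),
      ← lintegral_indicator (hs.preimage (measurable_const_add x)) _]
    have : ∀ y : ℝ, ((fun y => x + y) ⁻¹' s).indicator g2 y
        = (fun z => s.indicator (fun _ => (1:ℝ≥0∞)) z * g2 (z - x)) (x + y) := by
      intro y
      by_cases hy : x + y ∈ s <;>
        simp [Set.indicator_apply, hy, add_sub_cancel_left]
    simp_rw [this]
    exact lintegral_add_left_eq_self (fun z => s.indicator (fun _ => (1:ℝ≥0∞)) z * g2 (z - x)) x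
  rw [lintegral_congr hstep1]
  have hIm : Measurable fun p : ℝ × ℝ =>
      s.indicator (fun _ => (1:ℝ≥0∞)) p.2 * g2 (p.2 - p.1) :=
    ((measurable_const.indicator hs).comp measurable_snd).mul
      (hg2m.comp (measurable_snd.sub measurable_fst))
  rw [lintegral_withDensity_eq_lintegral_mul _ hg1m (by exact hIm.lintegral_prod_right')]
  calc ∫⁻ x, (g1 * fun x => ∫⁻ z, s.indicator (fun _ => (1:ℝ≥0∞)) z * g2 (z - x)) x
      = ∫⁻ x, ∫⁻ z, g1 x * (s.indicator (fun _ => (1:ℝ≥0∞)) z * g2 (z - x)) := by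
        refine lintegral_congr fun x => ?_
        simp only [Pi.mul_apply]
        rw [lintegral_const_mul' _ _ (by simp [hg1, gaussianPDF] : g1 x ≠ ⊤)]
    _ = ∫⁻ z, ∫⁻ x, g1 x * (s.indicator (fun _ => (1:ℝ≥0∞)) z * g2 (z - x)) := by
        apply lintegral_lintegral_swap
        exact ((hg1m.comp measurable_fst).mul hIm).aemeasurable
    _ = ∫⁻ z, s.indicator (fun _ => (1:ℝ≥0∞)) z * ∫⁻ x, g1 x * g2 (z - x) := by
        refine lintegral_congr fun z => ?_
        rw [← lintegral_const_mul' _ _ (by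
          by_cases hz : z ∈ s <;> simp [Set.indicator_apply, hz] : s.indicator (fun _ => (1:ℝ≥0∞)) z ≠ ⊤)]
        refine lintegral_congr fun x => ?_
        ring
    _ = ∫⁻ z, s.indicator (fun _ => (1:ℝ≥0∞)) z * gaussianPDF 0 (v1 + v2) z := by
        refine lintegral_congr fun z => ?_
        rw [gaussianPDFReal_conv v1 v2 h1 h2 z]
    _ = ∫⁻ z in s, gaussianPDF 0 (v1 + v2) z := by
        rw [← lintegral_indicator hs _]
        refine lintegral_congr fun z => ?_
        by_cases hz : z ∈ s <;> simp [Set.indicator_apply, hz]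

variable {Ω : Type*} [MeasurableSpace Ω] {μ : Measure Ω} [IsProbabilityMeasure μ]

lemma map_add_gauss {X Y : Ω → ℝ} (hX : Measurable X) (hY : Measurable Y)
    (h : ProbabilityTheory.IndepFun X Y μ) {v1 v2 : ℝ≥0}
    (hXl : μ.map X = gaussianReal 0 v1) (hYl : μ.map Y = gaussianReal 0 v2) :
    μ.map (fun ω => X ω + Y ω) = gaussianReal 0 (v1 + v2) := by
  have hmap := (ProbabilityTheory.indepFun_iff_map_prod_eq_prod_map_map
    hX.aemeasurable hY.aemeasurable).mp h
  have hcomp : (fun ω => X ω + Y ω)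
      = (fun p : ℝ × ℝ => p.1 + p.2) ∘ (fun ω => (X ω, Y ω)) := rfl
  rw [hcomp, ← Measure.map_map measurable_add (hX.prodMk hY), hmap, hXl, hYl]
  exact gaussianReal_conv v1 v2

lemma map_sum_gauss {ι : Type*} (s : Finset ι) (X : ι → Ω → ℝ)
    (hmeas : ∀ i, Measurable (X i))
    (hind : iIndepFun X μ)
    (v : ι → ℝ≥0) (hlaw : ∀ i, μ.map (X i) = gaussianReal 0 (v i)) :
    μ.map (fun ω => ∑ i ∈ s, X i ω) = gaussianReal 0 (∑ i ∈ s, v i) := by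
  classical
  induction s using Finset.induction_on with
  | empty =>
      simp only [Finset.sum_empty]
      rw [Measure.map_const, measure_univ, one_smul, ← gaussianReal_zero_var]
  | insert a s hi ih =>
      have hXs : (fun ω => ∑ i ∈ insert a s, X i ω)
          = fun ω => X a ω + ∑ i ∈ s, X i ω := by
        funext ω; rw [Finset.sum_insert hi]
      rw [hXs, Finset.sum_insert hi]
      have hindep : ProbabilityTheory.IndepFun (X a) (fun ω => ∑ i ∈ s, X i ω) μ := by
        have h' := (hind.indepFun_finsetSum_of_notMem hmeas hi).symm
        have : (∑ j ∈ s, X j) = fun ω => ∑ j ∈ s, X j ω := by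
          funext ω; exact Finset.sum_apply ω s X
        rwa [this] at h'
      exact map_add_gauss (hmeas a) (Finset.measurable_sum s fun i _ => hmeas i)
        hindep (hlaw a) ih

lemma gaussian_anticonc {t : ℝ} (ht : 0 ≤ t) :
    gaussianReal 0 1 {z : ℝ | |z| ≤ t} ≤ ENNReal.ofReal t := by
  rw [gaussianReal_apply _ one_ne_zero]
  have hset : {z : ℝ | |z| ≤ t} = Set.Icc (-t) t := by ext z; simp [abs_le]
  rw [hset]
  have hsqrt2 : (2:ℝ) ≤ Real.sqrt (2 * π) := by
    have h4 : (4:ℝ) ≤ 2 * π := by nlinarith [Real.pi_gt_three]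
    have := Real.sqrt_le_sqrt h4
    rwa [show Real.sqrt 4 = 2 by
      rw [show (4:ℝ) = 2 ^ 2 by norm_num, Real.sqrt_sq (by norm_num)]] at this
  have hsqrtpos : (0:ℝ) < Real.sqrt (2 * π) := by linarith
  calc ∫⁻ z in Set.Icc (-t) t, gaussianPDF 0 1 z
      ≤ ∫⁻ _ in Set.Icc (-t) t, ENNReal.ofReal ((Real.sqrt (2 * π))⁻¹) := by
        refine setLIntegral_mono measurable_const fun z _ => ?_
        refine ENNReal.ofReal_le_ofReal ?_
        unfold gaussianPDFReal
        rw [show ((1:ℝ≥0):ℝ) = 1 by norm_num, mul_one]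
        refine mul_le_of_le_one_right (by positivity) ?_
        refine Real.exp_le_one_iff.mpr ?_
        rw [neg_div]
        exact neg_nonpos.mpr (by positivity)
    _ = ENNReal.ofReal ((Real.sqrt (2 * π))⁻¹) * volume (Set.Icc (-t) t) :=
        setLIntegral_const _ _
    _ = ENNReal.ofReal ((Real.sqrt (2 * π))⁻¹ * (2 * t)) := by
        rw [Real.volume_Icc, show t - -t = 2 * t by ring,
          ← ENNReal.ofReal_mul (by positivity)]
    _ ≤ ENNReal.ofReal t := by
        refine ENNReal.ofReal_le_ofReal ?_
        have h1 : (Real.sqrt (2 * π))⁻¹ ≤ 2⁻¹ := by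
          exact inv_anti₀ (by norm_num) hsqrt2
        calc (Real.sqrt (2 * π))⁻¹ * (2 * t) ≤ 2⁻¹ * (2 * t) := by
              exact mul_le_mul_of_nonneg_right h1 (by positivity)
          _ = t := by ring

lemma gaussian_tail_Ici {v : ℝ≥0} (hv : v ≠ 0) {t : ℝ} (ht : 0 ≤ t) :
    gaussianReal 0 v (Set.Ici t) ≤ ENNReal.ofReal (Real.exp (-t ^ 2 / (2 * v)) / 2) := by
  have hvpos : (0:ℝ) < v := by exact_mod_cast pos_iff_ne_zero.mpr hv
  set c : ℝ := (Real.sqrt (2 * π * v))⁻¹ with hc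
  have hcpos : 0 < c := by positivity
  set G : ℝ → ℝ≥0∞ := fun y =>
    ENNReal.ofReal (Real.exp (-t ^ 2 / (2 * v)) * (c * Real.exp (-(2 * (v:ℝ))⁻¹ * y ^ 2)))
    with hG
  have hGmeas : Measurable G := by
    refine ENNReal.measurable_ofReal.comp ?_
    fun_prop
  calc gaussianReal 0 v (Set.Ici t)
      = ∫⁻ z in Set.Ici t, gaussianPDF 0 v z := gaussianReal_apply _ hv _
    _ ≤ ∫⁻ z in Set.Ici t, G (z - t) := by
        refine setLIntegral_mono (hGmeas.comp (measurable_id.sub measurable_const))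
          fun z hz => ?_
        simp only [Set.mem_Ici] at hz
        refine ENNReal.ofReal_le_ofReal ?_
        have hpdf : gaussianPDFReal 0 v z = c * Real.exp (-z ^ 2 / (2 * v)) := by
          unfold gaussianPDFReal
          rw [sub_zero, hc]
        have hexp : -z ^ 2 / (2 * (v:ℝ)) ≤ -t ^ 2 / (2 * (v:ℝ)) + -(2 * (v:ℝ))⁻¹ * (z - t) ^ 2 := by
          have hrw : -t ^ 2 / (2 * (v:ℝ)) + -(2 * (v:ℝ))⁻¹ * (z - t) ^ 2
              = (-t ^ 2 + -((z - t) ^ 2)) / (2 * (v:ℝ)) := by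
            ring
          rw [hrw]
          gcongr
          nlinarith [mul_nonneg ht (sub_nonneg.mpr hz)]
        calc gaussianPDFReal 0 v z = c * Real.exp (-z ^ 2 / (2 * v)) := hpdf
          _ ≤ c * Real.exp (-t ^ 2 / (2 * (v:ℝ)) + -(2 * (v:ℝ))⁻¹ * (z - t) ^ 2) :=
              mul_le_mul_of_nonneg_left (Real.exp_le_exp.mpr hexp) hcpos.le
          _ = Real.exp (-t ^ 2 / (2 * v)) * (c * Real.exp (-(2 * (v:ℝ))⁻¹ * (z - t) ^ 2)) := by
              rw [Real.exp_add]
              ring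
    _ = ∫⁻ z, ((Set.Ici (0:ℝ)).indicator G) (z - t) := by
        rw [← lintegral_indicator measurableSet_Ici]
        refine lintegral_congr fun z => ?_
        simp only [Set.indicator_apply, Set.mem_Ici, sub_nonneg]
    _ = ∫⁻ z in Set.Ici (0:ℝ), G z := by
        rw [lintegral_sub_right_eq_self ((Set.Ici (0:ℝ)).indicator G) t,
          lintegral_indicator measurableSet_Ici]
    _ = ENNReal.ofReal (Real.exp (-t ^ 2 / (2 * v)) / 2) := by
        have hb : (0:ℝ) < (2 * (v:ℝ))⁻¹ := by positivity
        have hint : IntegrableOn (fun z : ℝ =>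
            Real.exp (-t ^ 2 / (2 * (v:ℝ))) * (c * Real.exp (-(2 * (v:ℝ))⁻¹ * z ^ 2)))
            (Set.Ici 0) := by
          exact (((integrable_exp_neg_mul_sq hb).const_mul c).const_mul _).integrableOn
        rw [hG, ← ofReal_integral_eq_lintegral_ofReal hint
          (Filter.Eventually.of_forall fun z => by positivity)]
        congr 1
        rw [integral_const_mul, integral_const_mul, integral_Ici_eq_integral_Ioi,
          integral_gaussian_Ioi]
        have h1 : Real.sqrt (π / (2 * (v:ℝ))⁻¹) = Real.sqrt (2 * π * v) := by
          congr 1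
          field_simp
        have hs0 : Real.sqrt (2 * π * (v:ℝ)) ≠ 0 := by positivity
        rw [h1, hc]
        field_simp

lemma gaussian_tail {v : ℝ≥0} (hv : v ≠ 0) {t : ℝ} (ht : 0 ≤ t) :
    gaussianReal 0 v {z : ℝ | t ≤ |z|} ≤ ENNReal.ofReal (Real.exp (-t ^ 2 / (2 * v))) := by
  have hsub : {z : ℝ | t ≤ |z|} ⊆ Set.Iic (-t) ∪ Set.Ici t := by
    intro z hz
    have hz' : t ≤ |z| := hz
    rcases le_abs.mp hz' with h | h
    · exact Or.inr h
    · exact Or.inl (by simpa [Set.mem_Iic] using le_neg.mp h)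
  have hsymm : gaussianReal 0 v (Set.Iic (-t)) = gaussianReal 0 v (Set.Ici t) := by
    have hmap := gaussianReal_map_const_mul (μ := 0) (v := v) (-1 : ℝ)
    norm_num at hmap
    have hpre : (fun z : ℝ => -z) ⁻¹' (Set.Ici t) = Set.Iic (-t) := by
      ext z
      simp only [Set.mem_preimage, Set.mem_Ici, Set.mem_Iic]
      exact ⟨fun h => le_neg.mp h, fun h => le_neg.mpr h⟩
    conv_rhs => rw [← hmap]
    rw [Measure.map_apply measurable_neg measurableSet_Ici, hpre]
  calc gaussianReal 0 v {z : ℝ | t ≤ |z|}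
      ≤ gaussianReal 0 v (Set.Iic (-t) ∪ Set.Ici t) := measure_mono hsub
    _ ≤ gaussianReal 0 v (Set.Iic (-t)) + gaussianReal 0 v (Set.Ici t) :=
        measure_union_le _ _
    _ ≤ ENNReal.ofReal (Real.exp (-t ^ 2 / (2 * v)) / 2)
          + ENNReal.ofReal (Real.exp (-t ^ 2 / (2 * v)) / 2) := by
        rw [hsymm]
        exact add_le_add (gaussian_tail_Ici hv ht) (gaussian_tail_Ici hv ht)
    _ = ENNReal.ofReal (Real.exp (-t ^ 2 / (2 * v))) := by
        rw [← ENNReal.ofReal_add (by positivity) (by positivity), add_halves]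

lemma abs_le_abs_of_sign_ne {a b : ℝ} (h : Real.sign a ≠ Real.sign (a + b)) : |a| ≤ |b| := by
  by_contra hc
  push_neg at hc
  apply h
  rcases lt_trichotomy a 0 with ha | ha | ha
  · have habs : |b| < -a := by rwa [abs_of_neg ha] at hc
    have hb := le_abs_self b
    rw [Real.sign_of_neg ha, Real.sign_of_neg (by linarith)]
  · exact absurd hc (by simp [ha, abs_nonneg])
  · have habs : |b| < a := by rwa [abs_of_pos ha] at hc
    have hb := neg_abs_le b
    rw [Real.sign_of_pos ha, Real.sign_of_pos (by linarith)]

end StmtAux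

/-- Probability of a sign flip of the preactivation under a perturbation of size at most `R`. -/
theorem stmt_12 {Ω : Type*} [MeasurableSpace Ω] (μ : Measure Ω) [IsProbabilityMeasure μ]
    (d : ℕ) (hd : 0 < d)
    (w : Ω → EuclideanSpace ℝ (Fin d)) (hwmeas : Measurable w)
    (hwcoord : iIndepFun (fun i ω => w ω i) μ)
    (hwlaw : ∀ i, Measure.map (fun ω => w ω i) μ = gaussianReal 0 ((d : ℝ≥0))⁻¹)
    (x : EuclideanSpace ℝ (Fin d)) (hx : ‖x‖ = Real.sqrt d)
    (R : ℝ) (δ : EuclideanSpace ℝ (Fin d)) (hδ : ‖δ‖ ≤ R) :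
    μ {ω | Real.sign ⟪w ω, x⟫ ≠ Real.sign ⟪w ω, x + δ⟫} ≤
      ENNReal.ofReal (R * Real.sqrt (2 * Real.log d / d) + 1 / d) := by
  classical
  by_cases hδ0 : δ = 0
  · have hempty : {ω | Real.sign ⟪w ω, x⟫ ≠ Real.sign ⟪w ω, x + δ⟫} = ∅ := by
      subst hδ0
      simp
    rw [hempty]
    simp
  -- setup
  have hδpos : 0 < ‖δ‖ := norm_pos_iff.mpr hδ0
  have hR : 0 < R := lt_of_lt_of_le hδpos hδ
  have hdR : (0:ℝ) < d := by exact_mod_cast hd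
  have hd1 : (1:ℝ) ≤ d := by exact_mod_cast hd
  have hlogd : 0 ≤ Real.log d := Real.log_nonneg hd1
  set t := R * Real.sqrt (2 * Real.log d / d) with ht_def
  have ht : 0 ≤ t := mul_nonneg hR.le (Real.sqrt_nonneg _)
  have hwi : ∀ i, Measurable (fun ω => w ω i) := fun i => (measurable_pi_apply i).comp ((WithLp.measurable_ofLp _ _).comp hwmeas)
  have hinner : ∀ (y : EuclideanSpace ℝ (Fin d)) ω, ⟪w ω, y⟫ = ∑ i, w ω i * y i := by
    intro y ω
    rw [PiLp.inner_apply]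
    simp [RCLike.inner_apply, conj_trivial]
    exact Finset.sum_congr rfl fun i _ => mul_comm _ _
  -- law of inner products
  have hlawgen : ∀ y : EuclideanSpace ℝ (Fin d),
      μ.map (fun ω => ⟪w ω, y⟫)
        = gaussianReal 0 (∑ i, (⟨(y i) ^ 2, sq_nonneg _⟩ * ((d : ℝ≥0))⁻¹ : ℝ≥0)) := by
    intro y
    have hXind : iIndepFun (fun i (ω : Ω) => w ω i * y i) μ :=
      hwcoord.comp (fun i => (· * y i)) (fun i => measurable_mul_const _)
    have hXlaw : ∀ i, μ.map (fun ω => w ω i * y i)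
        = gaussianReal 0 ((⟨(y i) ^ 2, sq_nonneg _⟩ * ((d : ℝ≥0))⁻¹ : ℝ≥0)) := by
      intro i
      have hcomp : (fun ω => w ω i * y i) = (· * y i) ∘ (fun ω => w ω i) := rfl
      rw [hcomp, ← Measure.map_map (measurable_mul_const _) (hwi i), hwlaw i,
        gaussianReal_map_mul_const, mul_zero]
      rfl
    have hsum := StmtAux.map_sum_gauss (μ := μ) Finset.univ (fun i (ω : Ω) => w ω i * y i)
      (fun i => (hwi i).mul_const _) hXind _ hXlaw
    rw [← hsum]
    congr 1
    exact funext (hinner y)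
  -- variance computations
  have hvar : ∀ y : EuclideanSpace ℝ (Fin d),
      ((∑ i, (⟨(y i) ^ 2, sq_nonneg _⟩ * ((d : ℝ≥0))⁻¹ : ℝ≥0) : ℝ≥0) : ℝ) = ‖y‖ ^ 2 / d := by
    intro y
    push_cast
    change ∑ i, ((y i) ^ 2 * (((d : ℝ≥0) : ℝ))⁻¹) = _
    simp only [NNReal.coe_natCast]
    rw [← Finset.sum_mul, div_eq_mul_inv]
    congr 1
    rw [EuclideanSpace.norm_eq, Real.sq_sqrt (by positivity)]
    refine Finset.sum_congr rfl fun i _ => ?_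
    rw [Real.norm_eq_abs, sq_abs]
  -- law of A
  have hvx : (∑ i, (⟨(x i) ^ 2, sq_nonneg _⟩ * ((d : ℝ≥0))⁻¹ : ℝ≥0) : ℝ≥0) = 1 := by
    apply NNReal.coe_injective
    rw [hvar x, hx, Real.sq_sqrt hdR.le, NNReal.coe_one, div_self hdR.ne']
  have hlawA : μ.map (fun ω => ⟪w ω, x⟫) = gaussianReal 0 1 := by
    rw [hlawgen x, hvx]
  set vδ : ℝ≥0 := (∑ i, (⟨(δ i) ^ 2, sq_nonneg _⟩ * ((d : ℝ≥0))⁻¹ : ℝ≥0) : ℝ≥0) with hvδ_def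
  have hvδcoe : ((vδ : ℝ≥0) : ℝ) = ‖δ‖ ^ 2 / d := hvar δ
  have hvδ0 : vδ ≠ 0 := by
    intro h
    have h2 : ((vδ : ℝ≥0) : ℝ) = 0 := by rw [h]; simp
    rw [hvδcoe] at h2
    rcases div_eq_zero_iff.mp h2 with h3 | h3
    · nlinarith
    · nlinarith
  have hlawB : μ.map (fun ω => ⟪w ω, δ⟫) = gaussianReal 0 vδ := hlawgen δ
  -- measurability
  have hAmeas : Measurable (fun ω => ⟪w ω, x⟫) := by
    have h1 : (fun ω => ⟪w ω, x⟫) = fun ω => ∑ i, w ω i * x i := funext (hinner x)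
    rw [h1]
    exact Finset.measurable_sum _ fun i _ => (hwi i).mul_const _
  have hBmeas : Measurable (fun ω => ⟪w ω, δ⟫) := by
    have h1 : (fun ω => ⟪w ω, δ⟫) = fun ω => ∑ i, w ω i * δ i := funext (hinner δ)
    rw [h1]
    exact Finset.measurable_sum _ fun i _ => (hwi i).mul_const _
  -- event inclusion
  have hsplit : {ω | Real.sign ⟪w ω, x⟫ ≠ Real.sign ⟪w ω, x + δ⟫}
      ⊆ {ω | |⟪w ω, x⟫| ≤ t} ∪ {ω | t ≤ |⟪w ω, δ⟫|} := by
    intro ω hω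
    have hadd : ⟪w ω, x + δ⟫ = ⟪w ω, x⟫ + ⟪w ω, δ⟫ := inner_add_right _ _ _
    have h1 : |⟪w ω, x⟫| ≤ |⟪w ω, δ⟫| := by
      refine StmtAux.abs_le_abs_of_sign_ne ?_
      rw [← hadd]
      exact hω
    rcases le_total (|⟪w ω, δ⟫|) t with h | h
    · exact Or.inl (le_trans h1 h)
    · exact Or.inr h
  -- the two probability bounds
  have hA : μ {ω | |⟪w ω, x⟫| ≤ t} ≤ ENNReal.ofReal t := by
    have hset : MeasurableSet {z : ℝ | |z| ≤ t} :=
      measurableSet_le (measurable_abs) measurable_const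
    have : μ {ω | |⟪w ω, x⟫| ≤ t} = (μ.map (fun ω => ⟪w ω, x⟫)) {z : ℝ | |z| ≤ t} :=
      (Measure.map_apply hAmeas hset).symm
    rw [this, hlawA]
    exact StmtAux.gaussian_anticonc ht
  have hB : μ {ω | t ≤ |⟪w ω, δ⟫|} ≤ ENNReal.ofReal (1 / d) := by
    have hset : MeasurableSet {z : ℝ | t ≤ |z|} :=
      measurableSet_le measurable_const measurable_abs
    have h1 : μ {ω | t ≤ |⟪w ω, δ⟫|} = (μ.map (fun ω => ⟪w ω, δ⟫)) {z : ℝ | t ≤ |z|} :=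
      (Measure.map_apply hBmeas hset).symm
    rw [h1, hlawB]
    refine le_trans (StmtAux.gaussian_tail hvδ0 ht) (ENNReal.ofReal_le_ofReal ?_)
    -- exp bound
    have ht2 : t ^ 2 = R ^ 2 * (2 * Real.log d / d) := by
      rw [ht_def, mul_pow, Real.sq_sqrt (by positivity)]
    have hδ2pos : 0 < ‖δ‖ ^ 2 := by positivity
    have hexp : -t ^ 2 / (2 * (vδ : ℝ)) = -((R ^ 2 / ‖δ‖ ^ 2) * Real.log d) := by
      rw [ht2, hvδcoe]
      field_simp
    rw [hexp]
    have hR2 : 1 ≤ R ^ 2 / ‖δ‖ ^ 2 := by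
      rw [le_div_iff₀ hδ2pos, one_mul]
      exact pow_le_pow_left₀ (norm_nonneg _) hδ 2
    have hle : -((R ^ 2 / ‖δ‖ ^ 2) * Real.log d) ≤ -Real.log d := by
      have := mul_le_mul_of_nonneg_right hR2 hlogd
      rw [one_mul] at this
      linarith
    calc Real.exp (-((R ^ 2 / ‖δ‖ ^ 2) * Real.log d)) ≤ Real.exp (-Real.log d) :=
          Real.exp_le_exp.mpr hle
      _ = 1 / d := by rw [Real.exp_neg, Real.exp_log hdR, one_div]
  calc μ {ω | Real.sign ⟪w ω, x⟫ ≠ Real.sign ⟪w ω, x + δ⟫}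
      ≤ μ ({ω | |⟪w ω, x⟫| ≤ t} ∪ {ω | t ≤ |⟪w ω, δ⟫|}) := measure_mono hsplit
    _ ≤ μ {ω | |⟪w ω, x⟫| ≤ t} + μ {ω | t ≤ |⟪w ω, δ⟫|} := measure_union_le _ _
    _ ≤ ENNReal.ofReal t + ENNReal.ofReal (1 / d) := add_le_add hA hB
    _ = ENNReal.ofReal (R * Real.sqrt (2 * Real.log d / d) + 1 / d) := by
        rw [← ENNReal.ofReal_add ht (by positivity), ht_def]
end

section
/- Let w ~ N(0,(1/d)I_d), x with ‖x‖ = √d, and δ with ‖δ‖ ≤ √d/2, and let 0 < ε ≤ 1. Then P(∃ δ' with ‖δ−δ'‖ ≤ ε and sign(w·(x+δ)) ≠ sign(w·(x+δ'))) ≤ 2ε(1 + 2√(log(2/ε)/d)). -/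
open MeasureTheory ProbabilityTheory Real
set_option maxHeartbeats 1000000
open scoped RealInnerProductSpace ENNReal NNReal

-- pointwise convolution identity for gaussian pdfs
lemma gauss_pdf_conv {a b : ℝ≥0} (ha : a ≠ 0) (hb : b ≠ 0) (z x : ℝ) :
    gaussianPDFReal 0 a x * gaussianPDFReal x b z =
      gaussianPDFReal 0 (a + b) z *
        ((Real.sqrt (π / ((a + b) / (2 * a * b))))⁻¹ *
          Real.exp (-(((a:ℝ) + b) / (2 * a * b)) * (x - a * z / (a + b)) ^ 2)) := by
  have hA : 0 < (a:ℝ) := lt_of_le_of_ne a.2 (by exact_mod_cast (Ne.symm ha))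
  have hB : 0 < (b:ℝ) := lt_of_le_of_ne b.2 (by exact_mod_cast (Ne.symm hb))
  have hπ : 0 < π := Real.pi_pos
  simp only [gaussianPDFReal, NNReal.coe_add]
  rw [mul_mul_mul_comm, mul_mul_mul_comm ((Real.sqrt (2 * π * ((a:ℝ) + b)))⁻¹), ← Real.exp_add, ← Real.exp_add]
  have hconst : (Real.sqrt (2 * π * a))⁻¹ * (Real.sqrt (2 * π * b))⁻¹ =
      (Real.sqrt (2 * π * ((a:ℝ) + b)))⁻¹ * (Real.sqrt (π / (((a:ℝ) + b) / (2 * a * b))))⁻¹ := by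
    rw [← mul_inv, ← mul_inv, ← Real.sqrt_mul (by positivity), ← Real.sqrt_mul (by positivity)]
    congr 1
    rw [div_div_eq_mul_div, mul_comm]
    field_simp
  rw [hconst]
  congr 1
  congr 1
  field_simp
  ring

lemma gauss_conv_prod {a b : ℝ≥0} (ha : a ≠ 0) (hb : b ≠ 0) :
    Measure.map (fun p : ℝ × ℝ => p.1 + p.2) ((gaussianReal 0 a).prod (gaussianReal 0 b)) =
      gaussianReal 0 (a + b) := by
  have hA : 0 < (a:ℝ) := lt_of_le_of_ne a.2 (by exact_mod_cast (Ne.symm ha))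
  have hB : 0 < (b:ℝ) := lt_of_le_of_ne b.2 (by exact_mod_cast (Ne.symm hb))
  have hab : a + b ≠ 0 := by positivity
  ext s hs
  rw [Measure.map_apply measurable_add hs, gaussianReal_apply 0 hab s]
  have h1 : ((gaussianReal 0 a).prod (gaussianReal 0 b)) ((fun p : ℝ × ℝ => p.1 + p.2) ⁻¹' s) =
      ∫⁻ x, (gaussianReal 0 b) ((fun y => x + y) ⁻¹' s) ∂(gaussianReal 0 a) := by
    rw [Measure.prod_apply (measurable_add hs)]
    rfl
  rw [h1]
  have hm : Measurable (fun p : ℝ × ℝ => gaussianPDF p.1 b p.2) := by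
    have : (fun p : ℝ × ℝ => gaussianPDF p.1 b p.2) = fun p : ℝ × ℝ =>
        ENNReal.ofReal ((Real.sqrt (2 * π * (b:ℝ)))⁻¹ * Real.exp (-(p.2 - p.1)^2 / (2*(b:ℝ)))) := rfl
    rw [this]
    exact (measurable_const.mul
      (((measurable_snd.sub measurable_fst).pow_const 2).neg.div_const _).exp).ennreal_ofReal
  have h2 : ∀ x : ℝ, (gaussianReal 0 b) ((fun y => x + y) ⁻¹' s) =
      ∫⁻ z in s, gaussianPDF x b z := by
    intro x
    rw [← Measure.map_apply (measurable_const_add x) hs, gaussianReal_map_const_add,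
      zero_add, gaussianReal_apply x hb s]
  simp_rw [h2]
  rw [gaussianReal_of_var_ne_zero 0 ha,
    lintegral_withDensity_eq_lintegral_mul _ (measurable_gaussianPDF 0 a)]
  swap
  · exact Measurable.lintegral_prod_right (f := fun x z => gaussianPDF x b z) hm
  have hmul : ∀ x : ℝ, gaussianPDF 0 a x * ∫⁻ z in s, gaussianPDF x b z =
      ∫⁻ z in s, gaussianPDF 0 a x * gaussianPDF x b z := fun x =>
    (lintegral_const_mul' _ _ ENNReal.ofReal_ne_top).symm
  simp_rw [Pi.mul_apply, hmul]
  rw [lintegral_lintegral_swap]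
  swap
  · exact (((measurable_gaussianPDF 0 a).comp measurable_fst).mul hm).aemeasurable
  refine setLIntegral_congr_fun hs (fun z _ => ?_)
  -- inner integral computation
  set k : ℝ := ((a:ℝ) + b) / (2 * a * b) with hk_def
  have hk : 0 < k := by positivity
  have hexp_int : MeasureTheory.Integrable
      (fun x : ℝ => Real.exp (-k * (x - (a:ℝ) * z / ((a:ℝ) + b)) ^ 2)) := by
    exact (integrable_exp_neg_mul_sq hk).comp_sub_right _
  calc ∫⁻ x, gaussianPDF 0 a x * gaussianPDF x b z
      = ∫⁻ x, ENNReal.ofReal (gaussianPDFReal 0 (a + b) z *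
          ((Real.sqrt (π / k))⁻¹ *
            Real.exp (-k * (x - (a:ℝ) * z / ((a:ℝ) + b)) ^ 2))) := by
        refine lintegral_congr fun x => ?_
        rw [gaussianPDF, gaussianPDF, ← ENNReal.ofReal_mul (gaussianPDFReal_nonneg 0 a x)]
        rw [gauss_pdf_conv ha hb z x]
    _ = ENNReal.ofReal (gaussianPDFReal 0 (a + b) z * (Real.sqrt (π / k))⁻¹) *
          ∫⁻ x, ENNReal.ofReal (Real.exp (-k * (x - (a:ℝ) * z / ((a:ℝ) + b)) ^ 2)) := by
        rw [← lintegral_const_mul' _ _ ENNReal.ofReal_ne_top]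
        refine lintegral_congr fun x => ?_
        rw [← mul_assoc, ENNReal.ofReal_mul (mul_nonneg (gaussianPDFReal_nonneg _ _ _) (by positivity))]
    _ = gaussianPDF 0 (a + b) z := by
        rw [← ofReal_integral_eq_lintegral_ofReal hexp_int
          (Filter.Eventually.of_forall fun x => (Real.exp_pos _).le)]
        have : ∫ x : ℝ, Real.exp (-k * (x - (a:ℝ) * z / ((a:ℝ) + b)) ^ 2) = Real.sqrt (π / k) := by
          rw [integral_sub_right_eq_self (fun x => Real.exp (-k * x ^ 2))]
          exact integral_gaussian k
        rw [this, ← ENNReal.ofReal_mul (mul_nonneg (gaussianPDFReal_nonneg _ _ _) (by positivity)), gaussianPDF]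
        congr 1
        rw [mul_assoc, inv_mul_cancel₀ (by positivity), mul_one]

lemma map_eq_dirac_ae {Ω : Type*} [MeasurableSpace Ω] {μ : Measure Ω} {X : Ω → ℝ}
    (hX : Measurable X) (h : Measure.map X μ = Measure.dirac 0) : X =ᵐ[μ] 0 := by
  have : μ (X ⁻¹' {(0:ℝ)}ᶜ) = 0 := by
    rw [← Measure.map_apply hX (measurableSet_singleton (0:ℝ)).compl, h,
      Measure.dirac_apply' _ (measurableSet_singleton (0:ℝ)).compl]
    simp
  filter_upwards [measure_eq_zero_iff_ae_notMem.mp this] with ω hω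
  simpa using hω

lemma gauss_add {Ω : Type*} [MeasurableSpace Ω] {μ : Measure Ω} [IsProbabilityMeasure μ]
    {X Y : Ω → ℝ} (hX : Measurable X) (hY : Measurable Y) (hind : IndepFun X Y μ)
    {a b : ℝ≥0} (ha : Measure.map X μ = gaussianReal 0 a)
    (hb : Measure.map Y μ = gaussianReal 0 b) :
    Measure.map (fun ω => X ω + Y ω) μ = gaussianReal 0 (a + b) := by
  rcases eq_or_ne a 0 with rfl | ha0
  · rw [gaussianReal_zero_var] at ha
    have hXz : X =ᵐ[μ] 0 := map_eq_dirac_ae hX ha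
    have : (fun ω => X ω + Y ω) =ᵐ[μ] Y := by
      filter_upwards [hXz] with ω hω; simp [hω]
    rw [Measure.map_congr this, hb, zero_add]
  rcases eq_or_ne b 0 with rfl | hb0
  · rw [gaussianReal_zero_var] at hb
    have hYz : Y =ᵐ[μ] 0 := map_eq_dirac_ae hY hb
    have : (fun ω => X ω + Y ω) =ᵐ[μ] X := by
      filter_upwards [hYz] with ω hω; simp [hω]
    rw [Measure.map_congr this, ha, add_zero]
  have hjoint : Measure.map (fun ω => (X ω, Y ω)) μ =
      (Measure.map X μ).prod (Measure.map Y μ) :=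
    (indepFun_iff_map_prod_eq_prod_map_map hX.aemeasurable hY.aemeasurable).mp hind
  have : (fun ω => X ω + Y ω) = (fun p : ℝ × ℝ => p.1 + p.2) ∘ (fun ω => (X ω, Y ω)) := rfl
  rw [this, ← Measure.map_map measurable_add (hX.prodMk hY), hjoint, ha, hb,
    gauss_conv_prod ha0 hb0]

lemma gauss_sum {Ω ι : Type*} [MeasurableSpace Ω] {μ : Measure Ω} [IsProbabilityMeasure μ]
    {X : ι → Ω → ℝ} (hmeas : ∀ i, Measurable (X i))
    (hind : iIndepFun X μ) (c : ι → ℝ≥0)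
    (hlaw : ∀ i, Measure.map (X i) μ = gaussianReal 0 (c i)) (s : Finset ι) :
    Measure.map (fun ω => ∑ i ∈ s, X i ω) μ = gaussianReal 0 (∑ i ∈ s, c i) := by
  classical
  induction s using Finset.induction_on with
  | empty =>
      simp only [Finset.sum_empty]
      rw [Measure.map_const, measure_univ, one_smul, ← gaussianReal_zero_var]
  | insert j t hi ih =>
      simp only [Finset.sum_insert hi]
      have hsum : Measurable (fun ω => ∑ i ∈ t, X i ω) := by
        exact Finset.measurable_sum t fun i _ => hmeas i
      have hindep : IndepFun (X j) (∑ i ∈ t, X i) μ :=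
        (hind.indepFun_finsetSum_of_notMem hmeas hi).symm
      have hindep' : IndepFun (X j) (fun ω => ∑ i ∈ t, X i ω) μ := by
        have : (∑ i ∈ t, X i) = fun ω => ∑ i ∈ t, X i ω := by
          funext ω; simp [Finset.sum_apply]
        rwa [this] at hindep
      exact gauss_add (hmeas j) hsum hindep' (hlaw j) ih

lemma gauss_sq_exp {v : ℝ≥0} (hv : v ≠ 0) {t : ℝ} (ht : 2 * t * v < 1) :
    (∫ x : ℝ, Real.exp (t * x ^ 2) ∂(gaussianReal 0 v) = (Real.sqrt (1 - 2 * t * v))⁻¹)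
    ∧ Integrable (fun x : ℝ => Real.exp (t * x ^ 2)) (gaussianReal 0 v) := by
  have hV : 0 < (v:ℝ) := lt_of_le_of_ne v.2 (by exact_mod_cast (Ne.symm hv))
  set k : ℝ := 1 / (2 * v) - t with hk_def
  have hk : 0 < k := by
    rw [hk_def, sub_pos, lt_div_iff₀ (by positivity)]
    linarith [ht]
  have hpt : ∀ x : ℝ, gaussianPDFReal 0 v x * Real.exp (t * x ^ 2) =
      (Real.sqrt (2 * π * v))⁻¹ * Real.exp (-k * x ^ 2) := by
    intro x
    rw [gaussianPDFReal, mul_assoc, ← Real.exp_add, hk_def]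
    congr 2
    field_simp [hV.ne']
    ring
  have hwd : gaussianReal 0 v =
      volume.withDensity fun x => ((gaussianPDFReal 0 v x).toNNReal : ℝ≥0∞) :=
    gaussianReal_of_var_ne_zero 0 hv
  have hfm : Measurable (fun x => (gaussianPDFReal 0 v x).toNNReal) :=
    (measurable_gaussianPDFReal 0 v).real_toNNReal
  have hsmul : ∀ x : ℝ, (gaussianPDFReal 0 v x).toNNReal • Real.exp (t * x ^ 2) =
      (Real.sqrt (2 * π * v))⁻¹ * Real.exp (-k * x ^ 2) := by
    intro x
    rw [NNReal.smul_def, smul_eq_mul, Real.coe_toNNReal _ (gaussianPDFReal_nonneg 0 v x), hpt x]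
  constructor
  · rw [hwd, integral_withDensity_eq_integral_smul hfm]
    simp_rw [hsmul]
    rw [integral_const_mul, integral_gaussian k]
    have h1 : 0 < 1 - 2 * t * v := by linarith
    have h2 : π / k = 2 * π * v / (1 - 2 * t * v) := by
      rw [div_eq_div_iff hk.ne' h1.ne', hk_def]; field_simp [hV.ne']
    rw [h2, Real.sqrt_div (by positivity) _]
    have hAne : Real.sqrt (2 * π * v) ≠ 0 := by positivity
    field_simp
  · rw [hwd, integrable_withDensity_iff_integrable_smul hfm]
    have : (fun x : ℝ => (gaussianPDFReal 0 v x).toNNReal • Real.exp (t * x ^ 2)) =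
        fun x : ℝ => (Real.sqrt (2 * π * v))⁻¹ * Real.exp (-k * x ^ 2) := funext hsmul
    rw [this]
    exact (integrable_exp_neg_mul_sq hk).const_mul _

lemma gauss_anticonc {V : ℝ≥0} (hV : (1:ℝ)/4 ≤ V) {a : ℝ} (ha : 0 ≤ a) :
    (gaussianReal 0 V) {x : ℝ | |x| ≤ a} ≤ ENNReal.ofReal (4 * a / Real.sqrt (2 * π)) := by
  have hVpos : 0 < (V:ℝ) := lt_of_lt_of_le (by norm_num) hV
  have hVne : V ≠ 0 := by
    intro h; rw [h] at hVpos; simp at hVpos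
  have hset : {x : ℝ | |x| ≤ a} = Set.Icc (-a) a := by
    ext y; simp [abs_le]
  have hbound : ∀ y : ℝ, gaussianPDF 0 V y ≤ ENNReal.ofReal (2 / Real.sqrt (2 * π)) := by
    intro y
    refine ENNReal.ofReal_le_ofReal ?_
    rw [gaussianPDFReal]
    calc (Real.sqrt (2 * π * V))⁻¹ * Real.exp (-(y - 0) ^ 2 / (2 * V))
        ≤ (Real.sqrt (2 * π * V))⁻¹ * 1 := by
          refine mul_le_mul_of_nonneg_left ?_ (by positivity)
          refine Real.exp_le_one_iff.mpr ?_
          rw [neg_div]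
          exact neg_nonpos_of_nonneg (by positivity)
      _ ≤ 2 / Real.sqrt (2 * π) := by
          rw [mul_one]
          have key : Real.sqrt (2 * π) ≤ 2 * Real.sqrt (2 * π * V) := by
            rw [Real.sqrt_mul (by positivity) V]
            have h14 : Real.sqrt (1/4) ≤ Real.sqrt V := Real.sqrt_le_sqrt hV
            rw [show (1:ℝ)/4 = (1/2)^2 by norm_num, Real.sqrt_sq (by norm_num)] at h14
            nlinarith [Real.sqrt_nonneg (2 * π)]
          rw [le_div_iff₀ (by positivity), inv_mul_le_iff₀ (by positivity)]
          linarith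
  rw [hset, gaussianReal_apply 0 hVne _]
  calc ∫⁻ y in Set.Icc (-a) a, gaussianPDF 0 V y
      ≤ ∫⁻ _ in Set.Icc (-a) a, ENNReal.ofReal (2 / Real.sqrt (2 * π)) :=
        lintegral_mono fun y => hbound y
    _ = ENNReal.ofReal (2 / Real.sqrt (2 * π)) * volume (Set.Icc (-a) a) := by
        rw [setLIntegral_const]
    _ ≤ ENNReal.ofReal (4 * a / Real.sqrt (2 * π)) := by
        rw [Real.volume_Icc, show a - -a = 2 * a by ring, ← ENNReal.ofReal_mul (by positivity)]
        refine ENNReal.ofReal_le_ofReal (le_of_eq ?_)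
        ring

lemma sign_ne_abs_le {a b : ℝ} (h : Real.sign a ≠ Real.sign b) : |a| ≤ |a - b| := by
  rcases lt_trichotomy a 0 with ha | ha | ha
  · rcases lt_or_ge b 0 with hb | hb
    · exact absurd (by rw [Real.sign_of_neg ha, Real.sign_of_neg hb]) h
    · rw [abs_of_neg ha, abs_of_neg (by linarith : a - b < 0)]; linarith
  · simp [ha]
  · rcases lt_or_ge 0 b with hb | hb
    · exact absurd (by rw [Real.sign_of_pos ha, Real.sign_of_pos hb]) h
    · rw [abs_of_pos ha, abs_of_pos (by linarith : 0 < a - b)]; linarith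

/-- Probability that some `ε`-nearby perturbation flips the sign of the preactivation. -/
theorem stmt_13 {Ω : Type*} [MeasurableSpace Ω] (μ : Measure Ω) [IsProbabilityMeasure μ]
    (d : ℕ) (hd : 0 < d)
    (w : Ω → EuclideanSpace ℝ (Fin d)) (hwmeas : Measurable w)
    (hwcoord : iIndepFun (fun i ω => w ω i) μ)
    (hwlaw : ∀ i, Measure.map (fun ω => w ω i) μ = gaussianReal 0 ((d : ℝ≥0))⁻¹)
    (x : EuclideanSpace ℝ (Fin d)) (hx : ‖x‖ = Real.sqrt d)
    (δ : EuclideanSpace ℝ (Fin d)) (hδ : ‖δ‖ ≤ Real.sqrt d / 2)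
    (ε : ℝ) (hε : 0 < ε) (hε' : ε ≤ 1) :
    μ {ω | ∃ δ' : EuclideanSpace ℝ (Fin d), ‖δ - δ'‖ ≤ ε ∧
        Real.sign ⟪w ω, x + δ⟫ ≠ Real.sign ⟪w ω, x + δ'⟫} ≤
      ENNReal.ofReal (2 * ε * (1 + 2 * Real.sqrt (Real.log (2 / ε) / d))) := by
  have hdR : (0:ℝ) < d := Nat.cast_pos.mpr hd
  set v : EuclideanSpace ℝ (Fin d) := x + δ with hv_def
  set L : ℝ := Real.log (2 / ε) with hL_def
  have hL : 0 < L := Real.log_pos (by rw [lt_div_iff₀ hε]; linarith)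
  set r : ℝ := Real.sqrt (L / d) with hr_def
  have hr : 0 < r := Real.sqrt_pos.mpr (by positivity)
  have hr2 : r ^ 2 = L / d := Real.sq_sqrt (by positivity)
  set T : ℝ := (1 + 2 * r) ^ 2 with hT_def
  have hT1 : 1 < T := by nlinarith
  have hT0 : 0 < T := by linarith
  set tc : ℝ := d * (1 - 1 / T) / 2 with htc_def
  have htc : 0 ≤ tc := by
    have h' : 1 / T < 1 := by rw [div_lt_one hT0]; exact hT1
    rw [htc_def]
    have : 0 ≤ 1 - 1 / T := by linarith
    positivity
  have hwim : ∀ i, Measurable fun ω => w ω i := fun i => (measurable_pi_apply i).comp ((WithLp.measurable_ofLp _ _).comp hwmeas)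
  set Z : Ω → ℝ := fun ω => ∑ i, w ω i * v i with hZ_def
  have hZmeas : Measurable Z := Finset.measurable_sum _ fun i _ => (hwim i).mul_const _
  have hZinner : ∀ ω, ⟪w ω, v⟫ = Z ω := by
    intro ω
    simp [hZ_def, PiLp.inner_apply, conj_trivial]
    exact Finset.sum_congr rfl fun i _ => mul_comm _ _
  -- step 1 : event inclusion
  have hsub : {ω | ∃ δ' : EuclideanSpace ℝ (Fin d), ‖δ - δ'‖ ≤ ε ∧
        Real.sign ⟪w ω, x + δ⟫ ≠ Real.sign ⟪w ω, x + δ'⟫} ⊆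
      {ω | T ≤ ∑ i, (w ω i) ^ 2} ∪ {ω | |Z ω| ≤ ε * (1 + 2 * r)} := by
    rintro ω ⟨δ', hδ', hsign⟩
    by_cases hA : T ≤ ∑ i, (w ω i) ^ 2
    · exact Or.inl hA
    right
    push_neg at hA
    have h1 : |⟪w ω, x + δ⟫| ≤ |⟪w ω, x + δ⟫ - ⟪w ω, x + δ'⟫| := sign_ne_abs_le hsign
    have h2 : ⟪w ω, x + δ⟫ - ⟪w ω, x + δ'⟫ = ⟪w ω, δ - δ'⟫ := by
      rw [← inner_sub_right]
      congr 1
      abel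
    have h3 : |⟪w ω, δ - δ'⟫| ≤ ‖w ω‖ * ‖δ - δ'‖ := abs_real_inner_le_norm _ _
    have hnw : ‖w ω‖ ≤ 1 + 2 * r := by
      rw [EuclideanSpace.norm_eq]
      have : ∑ i, ‖w ω i‖ ^ 2 = ∑ i, (w ω i) ^ 2 := by
        refine Finset.sum_congr rfl fun i _ => ?_
        rw [Real.norm_eq_abs, sq_abs]
      rw [this]
      calc Real.sqrt (∑ i, (w ω i) ^ 2) ≤ Real.sqrt T := Real.sqrt_le_sqrt hA.le
        _ = 1 + 2 * r := by rw [hT_def, Real.sqrt_sq (by positivity)]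
    have : |⟪w ω, x + δ⟫| ≤ ε * (1 + 2 * r) := by
      calc |⟪w ω, x + δ⟫| ≤ |⟪w ω, δ - δ'⟫| := by rw [← h2]; exact h1
        _ ≤ ‖w ω‖ * ‖δ - δ'‖ := h3
        _ ≤ (1 + 2 * r) * ε := by
            refine mul_le_mul hnw hδ' (norm_nonneg _) (by positivity)
        _ = ε * (1 + 2 * r) := mul_comm _ _
    simpa [Set.mem_setOf_eq, ← hZinner ω, hv_def] using this
  refine le_trans (measure_mono hsub) ?_
  refine le_trans (measure_union_le _ _) ?_
  -- step 2 : chernoff bound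
  have hchern : μ {ω | T ≤ ∑ i, (w ω i) ^ 2} ≤ ENNReal.ofReal (ε ^ 2 / 4) := by
    have hdne : (d:ℝ) ≠ 0 := hdR.ne'
    have hvar_ne : ((d : ℝ≥0))⁻¹ ≠ 0 :=
      inv_ne_zero (Nat.cast_ne_zero.mpr hd.ne')
    have hform : 1 - 2 * tc * ((d:ℝ))⁻¹ = 1 / T := by
      rw [htc_def]
      field_simp
      try ring
    have htlt : 2 * tc * (((d : ℝ≥0))⁻¹ : ℝ) < 1 := by
      push_cast
      have h0 : 0 < 1 / T := by positivity
      linarith [hform]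
    obtain ⟨hval, hintg⟩ := gauss_sq_exp hvar_ne htlt
    set Xs : Fin d → Ω → ℝ := fun i ω => (w ω i) ^ 2 with hXs_def
    have hmeasS : ∀ i, Measurable (Xs i) := fun i => (hwim i).pow_const 2
    have hindS : iIndepFun Xs μ :=
      hwcoord.comp (fun _ y => y ^ 2) (fun _ => measurable_id.pow_const 2)
    have hfm : Measurable (fun y : ℝ => Real.exp (tc * y ^ 2)) := by fun_prop
    have h_int : ∀ i, Integrable (fun ω => Real.exp (tc * Xs i ω)) μ := by
      intro i
      have h' : Integrable (fun y : ℝ => Real.exp (tc * y ^ 2))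
          (Measure.map (fun ω => w ω i) μ) := by
        rw [hwlaw i]; exact hintg
      exact (integrable_map_measure hfm.aestronglyMeasurable (hwim i).aemeasurable).mp h'
    have hmgf : ∀ i, mgf (Xs i) μ tc = Real.sqrt T := by
      intro i
      have hmap : mgf (Xs i) μ tc = ∫ x : ℝ, Real.exp (tc * x ^ 2) ∂(gaussianReal 0 ((d : ℝ≥0))⁻¹) := by
        have h' := integral_map (μ := μ) (φ := fun ω => w ω i)
          (f := fun y : ℝ => Real.exp (tc * y ^ 2)) (hwim i).aemeasurable
          hfm.aestronglyMeasurable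
        rw [hwlaw i] at h'
        exact h'.symm
      rw [hmap, hval]
      push_cast
      rw [hform, one_div, Real.sqrt_inv, inv_inv]
    have key := measure_ge_le_exp_mul_mgf (μ := μ) (X := ∑ i, Xs i) T htc
      (iIndepFun.integrable_exp_mul_sum hindS hmeasS (fun i _ => h_int i))
    have hseteq : {ω | T ≤ ∑ i, (w ω i) ^ 2} = {ω | T ≤ (∑ i, Xs i) ω} := by
      ext ω
      simp [hXs_def, Finset.sum_apply]
    have hmgfsum : mgf (∑ i, Xs i) μ tc = Real.sqrt T ^ d := by
      rw [iIndepFun.mgf_sum hindS hmeasS]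
      simp [hmgf, Finset.prod_const, Finset.card_univ]
    have hrealbd : Real.exp (-tc * T) * Real.sqrt T ^ d ≤ ε ^ 2 / 4 := by
      have hsT : Real.sqrt T = 1 + 2 * r := by rw [hT_def, Real.sqrt_sq (by positivity)]
      have hpow : Real.sqrt T ^ d ≤ Real.exp ((d:ℝ) * (2 * r)) := by
        rw [hsT, Real.exp_nat_mul]
        exact pow_le_pow_left₀ (by positivity) (by linarith [Real.add_one_le_exp (2 * r)]) d
      have htcT : tc * T = (d:ℝ) * (T - 1) / 2 := by
        rw [htc_def]
        field_simp
      have hT4 : T - 1 = 4 * r + 4 * r ^ 2 := by rw [hT_def]; ring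
      have hdr2 : (d:ℝ) * r ^ 2 = L := by
        rw [hr2]
        field_simp
      calc Real.exp (-tc * T) * Real.sqrt T ^ d
          ≤ Real.exp (-tc * T) * Real.exp ((d:ℝ) * (2 * r)) :=
            mul_le_mul_of_nonneg_left hpow (Real.exp_nonneg _)
        _ = Real.exp ((d:ℝ) * (2 * r) - tc * T) := by rw [← Real.exp_add]; ring_nf
        _ = Real.exp (-(2 * L)) := by
            congr 1
            rw [htcT, hT4, ← hdr2]
            ring
        _ = ε ^ 2 / 4 := by
            have hexpL : Real.exp L = 2 / ε := by
              rw [hL_def]; exact Real.exp_log (by positivity)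
            rw [Real.exp_neg, show (2:ℝ)*L = L + L by ring, Real.exp_add, hexpL]
            field_simp
            ring
    rw [hmgfsum] at key
    rw [hseteq, ← ENNReal.ofReal_toReal (measure_ne_top μ _)]
    exact ENNReal.ofReal_le_ofReal (key.trans hrealbd)
  -- step 3 : anticoncentration bound
  have hanti : μ {ω | |Z ω| ≤ ε * (1 + 2 * r)} ≤
      ENNReal.ofReal (4 * (ε * (1 + 2 * r)) / Real.sqrt (2 * π)) := by
    set c : Fin d → ℝ≥0 := fun i => ⟨(v i)^2, sq_nonneg _⟩ * ((d : ℝ≥0))⁻¹ with hc_def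
    have hlaw' : ∀ i, Measure.map (fun ω => w ω i * v i) μ = gaussianReal 0 (c i) := by
      intro i
      have hcomp : Measure.map (fun ω => w ω i * v i) μ =
          Measure.map (· * v i) (Measure.map (fun ω => w ω i) μ) :=
        (Measure.map_map (measurable_mul_const (v i)) (hwim i)).symm
      rw [hcomp, hwlaw i, gaussianReal_map_mul_const, mul_zero]
      rfl
    have hind' : iIndepFun (fun i ω => w ω i * v i) μ :=
      hwcoord.comp (fun i y => y * v i) (fun i => measurable_id.mul_const _)
    have hmapZ : Measure.map Z μ = gaussianReal 0 (∑ i, c i) :=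
      gauss_sum (fun i => (hwim i).mul_const _) hind' c hlaw' Finset.univ
    have hnormv : Real.sqrt d / 2 ≤ ‖v‖ := by
      have h := norm_sub_le (x + δ) δ
      rw [add_sub_cancel_right, hx] at h
      rw [hv_def]
      linarith
    have hsumv : ∑ i, (v i) ^ 2 = ‖v‖ ^ 2 := by
      rw [EuclideanSpace.norm_eq, Real.sq_sqrt (by positivity)]
      refine Finset.sum_congr rfl fun i _ => ?_
      rw [Real.norm_eq_abs, sq_abs]
    have hVge : (1:ℝ)/4 ≤ ((∑ i, c i : ℝ≥0) : ℝ) := by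
      have hcoe : ((∑ i, c i : ℝ≥0) : ℝ) = (∑ i, (v i) ^ 2) * (d:ℝ)⁻¹ := by
        push_cast [hc_def]
        rw [Finset.sum_mul]
        exact Finset.sum_congr rfl fun i _ => (NNReal.coe_mul _ _).trans (by rw [NNReal.coe_inv, NNReal.coe_natCast]; rfl)
      rw [hcoe, hsumv]
      have h1 : (Real.sqrt d / 2) ^ 2 ≤ ‖v‖ ^ 2 := by
        refine pow_le_pow_left₀ (by positivity) hnormv 2
      have h2 : (Real.sqrt d / 2) ^ 2 = (d:ℝ) / 4 := by
        rw [div_pow, Real.sq_sqrt hdR.le]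
        norm_num
      rw [h2] at h1
      have h3 : (1:ℝ)/4 = ((d:ℝ)/4) * (d:ℝ)⁻¹ := by field_simp
      rw [h3]
      exact mul_le_mul_of_nonneg_right h1 (by positivity)
    have hset_meas : MeasurableSet {y : ℝ | |y| ≤ ε * (1 + 2 * r)} := by
      have : {y : ℝ | |y| ≤ ε * (1 + 2 * r)} = Set.Icc (-(ε * (1 + 2 * r))) (ε * (1 + 2 * r)) := by
        ext y; simp [abs_le]
      rw [this]; exact measurableSet_Icc
    have hpre : {ω | |Z ω| ≤ ε * (1 + 2 * r)} = Z ⁻¹' {y : ℝ | |y| ≤ ε * (1 + 2 * r)} := rfl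
    rw [hpre, ← Measure.map_apply hZmeas hset_meas, hmapZ]
    exact gauss_anticonc hVge (by positivity)
  refine le_trans (add_le_add hchern hanti) ?_
  rw [← ENNReal.ofReal_add (by positivity) (by positivity)]
  refine ENNReal.ofReal_le_ofReal ?_
  -- final arithmetic
  have hsqrt2pi : (16:ℝ)/7 ≤ Real.sqrt (2 * π) := by
    rw [show (16:ℝ)/7 = Real.sqrt ((16/7)^2) by rw [Real.sqrt_sq (by norm_num)]]
    refine Real.sqrt_le_sqrt ?_
    nlinarith [Real.pi_gt_three]
  have h2 : 4 * (ε * (1 + 2 * r)) / Real.sqrt (2 * π) ≤ (7/4) * (ε * (1 + 2 * r)) := by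
    rw [div_le_iff₀ (by positivity)]
    have : (4:ℝ) ≤ (7/4) * (16/7) := by norm_num
    nlinarith [mul_pos hε (by positivity : (0:ℝ) < 1 + 2 * r)]
  have h1 : ε ^ 2 / 4 ≤ ε * (1 + 2 * r) / 4 := by nlinarith [hr.le, hε.le, hε']
  linarith
end
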